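/- Let f : (0, ∞) → ℝ be given by f(x) = 1/x, and let g : (0, ∞) → ℝ be twice differentiable. Then 12 f''(x)² g''(x) − 12 f''(x) f'''(x) g'(x) + (5 f'''(x)² − 3 f''(x) f⁽⁴⁾(x)) g(x) = 0 for all x ∈ (0, ∞) if and only if there exist constants c₁, c₂ ∈ ℝ such that g(x) = c₁ x^{−1/2} + c₂ x^{−3/2} for all x ∈ (0, ∞). -/

import Mathlib

open Set

private lemma derivEqOn {F G : ℝ → ℝ} (h : ∀ y ∈ Ioi (0:ℝ), F y = G y) :
    ∀ x ∈ Ioi (0:ℝ), deriv F x = deriv G x := fun _x hx =>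
  Filter.EventuallyEq.deriv_eq (Filter.eventuallyEq_of_mem (isOpen_Ioi.mem_nhds hx) h)

private lemma constOn {F : ℝ → ℝ} (h : ∀ x ∈ Ioi (0:ℝ), HasDerivAt F 0 x) :
    ∀ x ∈ Ioi (0:ℝ), F x = F 1 := fun x hx =>
  (convex_Ioi (0:ℝ)).is_const_of_fderivWithin_eq_zero
    (fun y hy => (h y hy).differentiableAt.differentiableWithinAt)
    (fun y hy => by
      rw [fderivWithin_of_isOpen isOpen_Ioi hy, (h y hy).hasFDerivAt.fderiv]
      ext; simp)
    hx (mem_Ioi.mpr one_pos)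

private lemma inv_d2 : ∀ x ∈ Ioi (0:ℝ), deriv^[2] (fun t : ℝ => 1/t) x = 2/x^3 := by
  intro x hx
  have h1 : deriv (fun t : ℝ => 1/t) = fun t : ℝ => -(t^2)⁻¹ := by
    funext t; simp [one_div, deriv_inv]
  show deriv (deriv (fun t : ℝ => 1/t)) x = _
  rw [h1]
  have h2 : HasDerivAt (fun t : ℝ => -(t^2)⁻¹) (2/x^3) x := by
    have := ((hasDerivAt_pow 2 x).inv (pow_ne_zero 2 (ne_of_gt hx))).neg
    refine this.congr_deriv ?_
    have : x ≠ 0 := ne_of_gt hx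
    field_simp
    ring
  exact h2.deriv

private lemma inv_d3 : ∀ x ∈ Ioi (0:ℝ), deriv^[3] (fun t : ℝ => 1/t) x = -6/x^4 := by
  intro x hx
  rw [Function.iterate_succ_apply', derivEqOn inv_d2 x hx]
  have h2 : HasDerivAt (fun t : ℝ => 2/t^3) (-6/x^4) x := by
    have := (((hasDerivAt_pow 3 x).inv (pow_ne_zero 3 (ne_of_gt hx))).const_mul 2)
    refine this.congr_deriv ?_
    have : x ≠ 0 := ne_of_gt hx
    push_cast
    field_simp
    ring
  exact h2.deriv

private lemma inv_d4 : ∀ x ∈ Ioi (0:ℝ), deriv^[4] (fun t : ℝ => 1/t) x = 24/x^5 := by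
  intro x hx
  rw [Function.iterate_succ_apply', derivEqOn inv_d3 x hx]
  have h2 : HasDerivAt (fun t : ℝ => -6/t^4) (24/x^5) x := by
    have := (((hasDerivAt_pow 4 x).inv (pow_ne_zero 4 (ne_of_gt hx))).const_mul (-6))
    refine this.congr_deriv ?_
    have : x ≠ 0 := ne_of_gt hx
    push_cast
    field_simp
    ring
  exact h2.deriv

/-- Theorem 6.1, case 2): for `f(x) = 1/x` on `(0,∞)`, a twice differentiable
`g` satisfies the second equation of system (sys1) iff
`g(x) = c₁ x^{-1/2} + c₂ x^{-3/2}`. -/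
theorem one_var_admissible_inv (g : ℝ → ℝ)
    (hg : ∀ x ∈ Ioi (0 : ℝ), DifferentiableAt ℝ g x ∧ DifferentiableAt ℝ (deriv g) x) :
    (∀ x ∈ Ioi (0 : ℝ),
        12 * (deriv^[2] (fun t : ℝ => 1 / t) x) ^ 2 * deriv^[2] g x
          - 12 * deriv^[2] (fun t : ℝ => 1 / t) x
              * deriv^[3] (fun t : ℝ => 1 / t) x * deriv g x
          + (5 * (deriv^[3] (fun t : ℝ => 1 / t) x) ^ 2
              - 3 * deriv^[2] (fun t : ℝ => 1 / t) x
                  * deriv^[4] (fun t : ℝ => 1 / t) x) * g x = 0) ↔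
    (∃ c₁ c₂ : ℝ, ∀ x ∈ Ioi (0 : ℝ),
        g x = c₁ * x ^ (-(1 : ℝ) / 2) + c₂ * x ^ (-(3 : ℝ) / 2)) := by
  constructor
  · intro heq
    -- Reduce to the Euler equation
    have heuler : ∀ x ∈ Ioi (0:ℝ),
        4*x^2*(deriv (deriv g) x) + 12*x*(deriv g x) + 3*(g x) = 0 := by
      intro x hx
      have h := heq x hx
      rw [inv_d2 x hx, inv_d3 x hx, inv_d4 x hx,
        show deriv^[2] g x = deriv (deriv g) x from rfl] at h
      have hx0 : x ≠ 0 := ne_of_gt (mem_Ioi.mp hx)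
      field_simp at h
      have key : 12*x^21*(4*x^2*(deriv (deriv g) x) + 12*x*(deriv g x) + 3*(g x)) = 0 := by
        linear_combination x^21 * h
      have h21 : (12:ℝ)*x^21 ≠ 0 := by positivity
      exact (mul_eq_zero.mp key).resolve_left h21
    -- H y = y^{3/2} g y ; φ is its derivative on Ioi 0
    have hder1 : ∀ x ∈ Ioi (0:ℝ), HasDerivAt (fun y : ℝ => y ^ ((3:ℝ)/2) * g y)
        (3/2 * (x ^ ((1:ℝ)/2) * g x) + x ^ ((3:ℝ)/2) * deriv g x) x := by
      intro x hx
      have hx0 : (0:ℝ) < x := hx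
      have h1 := Real.hasDerivAt_rpow_const (x := x) (p := (3:ℝ)/2) (Or.inl hx0.ne')
      rw [show (3:ℝ)/2 - 1 = 1/2 by norm_num] at h1
      have := h1.mul (hg x hx).1.hasDerivAt
      refine this.congr_deriv ?_
      ring
    have hφd : ∀ x ∈ Ioi (0:ℝ), HasDerivAt
        (fun y : ℝ => 3/2 * (y ^ ((1:ℝ)/2) * g y) + y ^ ((3:ℝ)/2) * deriv g y) 0 x := by
      intro x hx
      have hx0 : (0:ℝ) < x := hx
      have hrA := Real.hasDerivAt_rpow_const (x := x) (p := (1:ℝ)/2) (Or.inl hx0.ne')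
      rw [show (1:ℝ)/2 - 1 = -(1:ℝ)/2 by norm_num] at hrA
      have hrB := Real.hasDerivAt_rpow_const (x := x) (p := (3:ℝ)/2) (Or.inl hx0.ne')
      rw [show (3:ℝ)/2 - 1 = 1/2 by norm_num] at hrB
      have hA := (hrA.mul (hg x hx).1.hasDerivAt).const_mul ((3:ℝ)/2)
      have hB := hrB.mul (hg x hx).2.hasDerivAt
      have hsum := hA.add hB
      have hval : 3/2 * (1/2 * x ^ (-(1:ℝ)/2) * g x + x ^ ((1:ℝ)/2) * deriv g x)
          + (3/2 * x ^ ((1:ℝ)/2) * deriv g x + x ^ ((3:ℝ)/2) * deriv (deriv g) x) = 0 := by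
        have e1 : x ^ ((1:ℝ)/2) = x * x ^ (-(1:ℝ)/2) := by
          rw [show ((1:ℝ)/2) = 1 + (-(1:ℝ)/2) by ring, Real.rpow_add hx0, Real.rpow_one]
        have e2 : x ^ ((3:ℝ)/2) = x^2 * x ^ (-(1:ℝ)/2) := by
          rw [show ((3:ℝ)/2) = 2 + (-(1:ℝ)/2) by ring, Real.rpow_add hx0,
            show ((2:ℝ)) = ((2:ℕ):ℝ) by norm_num, Real.rpow_natCast]
        rw [e1, e2]
        linear_combination (x ^ (-(1:ℝ)/2) / 4) * heuler x hx
      have : HasDerivAt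
          (fun y : ℝ => 3/2 * (y ^ ((1:ℝ)/2) * g y) + y ^ ((3:ℝ)/2) * deriv g y)
          (3/2 * (1/2 * x ^ (-(1:ℝ)/2) * g x + x ^ ((1:ℝ)/2) * deriv g x)
            + (3/2 * x ^ ((1:ℝ)/2) * deriv g x + x ^ ((3:ℝ)/2) * deriv (deriv g) x)) x := by
        exact hsum
      rwa [hval] at this
    -- deriv H has derivative 0 on Ioi 0
    have hD2 : ∀ x ∈ Ioi (0:ℝ),
        HasDerivAt (deriv (fun y : ℝ => y ^ ((3:ℝ)/2) * g y)) 0 x := by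
      intro x hx
      refine (hφd x hx).congr_of_eventuallyEq ?_
      exact Filter.eventuallyEq_of_mem (isOpen_Ioi.mem_nhds hx)
        (fun y hy => (hder1 y hy).deriv)
    set H : ℝ → ℝ := fun y : ℝ => y ^ ((3:ℝ)/2) * g y with hHdef
    set b : ℝ := deriv H 1 with hbdef
    have hb : ∀ x ∈ Ioi (0:ℝ), deriv H x = b := constOn hD2
    have hψ : ∀ x ∈ Ioi (0:ℝ), HasDerivAt (fun y => H y - b * y) 0 x := by
      intro x hx
      have h1 := (hder1 x hx).sub ((hasDerivAt_id x).const_mul b)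
      have hφx : 3/2 * (x ^ ((1:ℝ)/2) * g x) + x ^ ((3:ℝ)/2) * deriv g x = b := by
        rw [← (hder1 x hx).deriv]
        exact hb x hx
      rw [hφx, mul_one, sub_self] at h1
      exact h1
    have hψc := constOn hψ
    refine ⟨b, H 1 - b * 1, fun x hx => ?_⟩
    have hx0 : (0:ℝ) < x := hx
    have hinv : x ^ (-(3:ℝ)/2) * x ^ ((3:ℝ)/2) = 1 := by
      rw [← Real.rpow_add hx0]
      norm_num
    have hH : x ^ ((3:ℝ)/2) * g x = (H 1 - b * 1) + b * x := by
      have := hψc x hx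
      simp only [hHdef] at this ⊢
      linarith [this]
    have e3 : x * x ^ (-(3:ℝ)/2) = x ^ (-(1:ℝ)/2) := by
      rw [show (-(1:ℝ)/2) = 1 + (-(3:ℝ)/2) by ring, Real.rpow_add hx0, Real.rpow_one]
    calc g x = x ^ (-(3:ℝ)/2) * (x ^ ((3:ℝ)/2) * g x) := by
          rw [← mul_assoc, hinv, one_mul]
      _ = x ^ (-(3:ℝ)/2) * ((H 1 - b * 1) + b * x) := by rw [hH]
      _ = b * x ^ (-(1:ℝ)/2) + (H 1 - b * 1) * x ^ (-(3:ℝ)/2) := by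
          rw [← e3]; ring
  · rintro ⟨c₁, c₂, hc⟩ x hx
    have hx0 : (0:ℝ) < x := hx
    have F1 : ∀ y ∈ Ioi (0:ℝ), deriv g y
        = c₁ * (-(1:ℝ)/2 * y ^ (-(1:ℝ)/2 - 1)) + c₂ * (-(3:ℝ)/2 * y ^ (-(3:ℝ)/2 - 1)) := by
      intro y hy
      have hy0 : (0:ℝ) < y := hy
      rw [derivEqOn hc y hy]
      exact (((Real.hasDerivAt_rpow_const (Or.inl hy0.ne')).const_mul c₁).add
        ((Real.hasDerivAt_rpow_const (Or.inl hy0.ne')).const_mul c₂)).deriv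
    have F2 : deriv^[2] g x
        = c₁ * (-(1:ℝ)/2 * ((-(1:ℝ)/2 - 1) * x ^ (-(1:ℝ)/2 - 1 - 1)))
          + c₂ * (-(3:ℝ)/2 * ((-(3:ℝ)/2 - 1) * x ^ (-(3:ℝ)/2 - 1 - 1))) := by
      rw [show deriv^[2] g x = deriv (deriv g) x from rfl, derivEqOn F1 x hx]
      exact ((((Real.hasDerivAt_rpow_const (Or.inl hx0.ne')).const_mul (-(1:ℝ)/2)).const_mul c₁).add
        (((Real.hasDerivAt_rpow_const (Or.inl hx0.ne')).const_mul (-(3:ℝ)/2)).const_mul c₂)).deriv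
    rw [inv_d2 x hx, inv_d3 x hx, inv_d4 x hx, F2, F1 x hx, hc x hx]
    have em : ∀ a : ℝ, x ^ (a - 1) = x ^ a * x⁻¹ := fun a => by
      rw [show a - 1 = a + (-1) by ring, Real.rpow_add hx0, Real.rpow_neg_one]
    have e0 : x ^ (-(3:ℝ)/2) = x ^ (-(1:ℝ)/2) * x⁻¹ := by
      rw [show (-(3:ℝ)/2) = -(1:ℝ)/2 + (-1) by ring, Real.rpow_add hx0, Real.rpow_neg_one]
    simp only [em, e0]
    have hxne : x ≠ 0 := hx0.ne'
    field_simp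
    ring
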